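/- arXiv:1707.00810 — 6 statements merged into one kernel-verified Lean document; each statement's English description precedes it below -/
import Mathlib

section
/- Let P_X, Q_X be probability mass functions on a finite set X with P_X ≪ Q_X, and let α ∈ (0,1]. Then the total variation distance satisfies |P_X - Q_X| ≤ sqrt((2/α) · D_α(P_X ‖ Q_X)), where D_α(P‖Q) = (1/(α-1)) log ∑_x P(x)^α Q(x)^{1-α} is the Rényi divergence of order α (with D_1 being the relative entropy). -/
open Finset

/-- Pinsker-type inequality for the Rényi divergence of order `α ∈ (0,1]`:
`|P - Q| ≤ sqrt((2/α) D_α(P‖Q))`, where `D_1` is the relative entropy. -/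
theorem tv_le_sqrt_renyi {X : Type} [Fintype X]
    (P Q : X → ℝ) (hP0 : ∀ x, 0 ≤ P x) (hP1 : ∑ x, P x = 1)
    (hQ0 : ∀ x, 0 ≤ Q x) (hQ1 : ∑ x, Q x = 1)
    (hac : ∀ x, Q x = 0 → P x = 0)
    (α : ℝ) (hα0 : 0 < α) (hα1 : α ≤ 1) :
    (1 / 2) * ∑ x, |P x - Q x| ≤
      Real.sqrt ((2 / α) *
        (if α = 1 then ∑ x, P x * Real.log (P x / Q x)
         else (1 / (α - 1)) * Real.log (∑ x, P x ^ α * Q x ^ (1 - α)))) := by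
  set V := ∑ x, |P x - Q x| with hV
  set Z := ∑ x, Real.sqrt (P x) * Real.sqrt (Q x) with hZ
  have hZ0 : (0:ℝ) ≤ Z :=
    Finset.sum_nonneg fun x _ => mul_nonneg (Real.sqrt_nonneg _) (Real.sqrt_nonneg _)
  have hZ1 : Z ≤ 1 := by
    have h := Finset.sum_mul_sq_le_sq_mul_sq Finset.univ
      (fun x => Real.sqrt (P x)) (fun x => Real.sqrt (Q x))
    simp only [Real.sq_sqrt (hP0 _), Real.sq_sqrt (hQ0 _)] at h
    rw [hP1, hQ1] at h
    nlinarith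
  -- V^2 ≤ 8 (1 - Z)
  have hV2 : V ^ 2 ≤ 8 * (1 - Z) := by
    have h := Finset.sum_sq_le_sum_mul_sum_of_sq_eq_mul Finset.univ
      (r := fun x => |P x - Q x|)
      (f := fun x => (Real.sqrt (P x) - Real.sqrt (Q x)) ^ 2)
      (g := fun x => (Real.sqrt (P x) + Real.sqrt (Q x)) ^ 2)
      (fun x _ => sq_nonneg _) (fun x _ => sq_nonneg _)
      (fun x _ => by
        rw [sq_abs, ← mul_pow]
        congr 1
        linear_combination Real.sq_sqrt (hQ0 x) - Real.sq_sqrt (hP0 x))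
    have e1 : ∑ x, (Real.sqrt (P x) - Real.sqrt (Q x)) ^ 2 = 2 - 2 * Z := by
      have : ∀ x, (Real.sqrt (P x) - Real.sqrt (Q x)) ^ 2
          = P x + Q x - 2 * (Real.sqrt (P x) * Real.sqrt (Q x)) := by
        intro x
        have := Real.sq_sqrt (hP0 x); have := Real.sq_sqrt (hQ0 x); nlinarith [Real.sq_sqrt (hP0 x), Real.sq_sqrt (hQ0 x)]
      simp only [this]
      rw [Finset.sum_sub_distrib, Finset.sum_add_distrib, hP1, hQ1, ← Finset.mul_sum, ← hZ]
      ring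
    have e2 : ∑ x, (Real.sqrt (P x) + Real.sqrt (Q x)) ^ 2 = 2 + 2 * Z := by
      have : ∀ x, (Real.sqrt (P x) + Real.sqrt (Q x)) ^ 2
          = P x + Q x + 2 * (Real.sqrt (P x) * Real.sqrt (Q x)) := by
        intro x
        nlinarith [Real.sq_sqrt (hP0 x), Real.sq_sqrt (hQ0 x)]
      simp only [this]
      rw [Finset.sum_add_distrib, Finset.sum_add_distrib, hP1, hQ1, ← Finset.mul_sum, ← hZ]
      ring
    rw [e1, e2] at h
    nlinarith
  -- the divergence
  set D := (if α = 1 then ∑ x, P x * Real.log (P x / Q x)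
      else (1 / (α - 1)) * Real.log (∑ x, P x ^ α * Q x ^ (1 - α))) with hD
  have hkey : 2 * α * (1 - Z) ≤ D := by
    by_cases h1 : α = 1
    · -- KL case: pointwise P log(P/Q) ≥ 2 (P - √(PQ))
      rw [hD, if_pos h1]
      have hpt : ∀ x, 2 * (P x - Real.sqrt (P x) * Real.sqrt (Q x)) ≤ P x * Real.log (P x / Q x) := by
        intro x
        rcases eq_or_lt_of_le (hP0 x) with hp | hp
        · simp [← hp]
        · have hq : 0 < Q x := by
            rcases eq_or_lt_of_le (hQ0 x) with h | h
            · exact absurd (hac x h.symm) (by linarith)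
            · exact h
          have hlog : Real.log (Real.sqrt (Q x) / Real.sqrt (P x))
              ≤ Real.sqrt (Q x) / Real.sqrt (P x) - 1 :=
            Real.log_le_sub_one_of_pos (by positivity)
          have hsp : (0:ℝ) < Real.sqrt (P x) := Real.sqrt_pos.mpr hp
          have e : P x * Real.log (P x / Q x)
              = -2 * P x * Real.log (Real.sqrt (Q x) / Real.sqrt (P x)) := by
            rw [Real.log_div (by positivity) (by positivity),
              Real.log_div (by positivity) (by positivity),
              Real.log_sqrt (hQ0 x), Real.log_sqrt (hP0 x)]
            ring
          have e2 : P x * (Real.sqrt (Q x) / Real.sqrt (P x)) = Real.sqrt (P x) * Real.sqrt (Q x) := by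
            rw [mul_div_assoc', div_eq_iff hsp.ne']
            linear_combination (-Real.sqrt (Q x)) * Real.sq_sqrt (hP0 x)
          rw [e]
          nlinarith [mul_le_mul_of_nonneg_left hlog (le_of_lt hp)]
      calc 2 * α * (1 - Z) = 2 * (1 - Z) := by rw [h1]; ring
        _ = ∑ x, 2 * (P x - Real.sqrt (P x) * Real.sqrt (Q x)) := by
            rw [← Finset.mul_sum, Finset.sum_sub_distrib, hP1, hZ]
        _ ≤ ∑ x, P x * Real.log (P x / Q x) := Finset.sum_le_sum fun x _ => hpt x
    · -- α < 1 case
      have hαlt : α < 1 := lt_of_le_of_ne hα1 h1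
      set W := ∑ x, P x ^ α * Q x ^ (1 - α) with hW
      have hWnn : ∀ x, 0 ≤ P x ^ α * Q x ^ (1 - α) := fun x =>
        mul_nonneg (Real.rpow_nonneg (hP0 x) _) (Real.rpow_nonneg (hQ0 x) _)
      have hWpos : 0 < W := by
        -- some x has P x > 0, then Q x > 0
        obtain ⟨x, hx⟩ : ∃ x, 0 < P x := by
          by_contra h
          push_neg at h
          have : ∑ x, P x = 0 := Finset.sum_eq_zero fun x _ => le_antisymm (h x) (hP0 x)
          rw [hP1] at this; norm_num at this
        have hq : 0 < Q x := by
          rcases eq_or_lt_of_le (hQ0 x) with h | h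
          · exact absurd (hac x h.symm) (by linarith)
          · exact h
        exact Finset.sum_pos' (fun y _ => hWnn y)
          ⟨x, Finset.mem_univ x, by positivity⟩
      -- key: W ≤ 1 - 2*min(α,1-α)*(1-Z), proved by cases
      have hWle : W ≤ 1 - 2 * min α (1 - α) * (1 - Z) := by
        by_cases hhalf : α ≤ 1/2
        · have hmin : min α (1 - α) = α := min_eq_left (by linarith)
          have hpt : ∀ x, P x ^ α * Q x ^ (1 - α)
              ≤ 2 * α * (Real.sqrt (P x) * Real.sqrt (Q x)) + (1 - 2*α) * Q x := by
            intro x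
            have hgm := Real.geom_mean_le_arith_mean2_weighted
              (by linarith : (0:ℝ) ≤ 2*α) (by linarith : (0:ℝ) ≤ 1 - 2*α)
              (mul_nonneg (Real.sqrt_nonneg (P x)) (Real.sqrt_nonneg (Q x))) (hQ0 x)
              (by ring)
            refine le_trans (le_of_eq ?_) hgm
            have hz : 0 ≤ P x * Q x := mul_nonneg (hP0 x) (hQ0 x)
            have h1' : (Real.sqrt (P x) * Real.sqrt (Q x)) ^ (2*α) = P x ^ α * Q x ^ α := by
              rw [← Real.sqrt_mul (hP0 x), Real.sqrt_eq_rpow, ← Real.rpow_mul hz,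
                show (1/2) * (2*α) = α by ring, Real.mul_rpow (hP0 x) (hQ0 x)]
            rw [h1', mul_assoc,
              ← Real.rpow_add' (hQ0 x) (by intro h; apply h1; linarith : α + (1 - 2*α) ≠ 0),
              show α + (1 - 2*α) = 1 - α by ring]
          calc W ≤ ∑ x, (2 * α * (Real.sqrt (P x) * Real.sqrt (Q x)) + (1 - 2*α) * Q x) :=
                Finset.sum_le_sum fun x _ => hpt x
            _ = 2 * α * Z + (1 - 2*α) := by
                rw [Finset.sum_add_distrib, ← Finset.mul_sum, ← Finset.mul_sum, ← hZ, hQ1]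
                ring
            _ = 1 - 2 * min α (1 - α) * (1 - Z) := by rw [hmin]; ring
        · push_neg at hhalf
          have hmin : min α (1 - α) = 1 - α := min_eq_right (by linarith)
          have hpt : ∀ x, P x ^ α * Q x ^ (1 - α)
              ≤ (2*α - 1) * P x + 2 * (1-α) * (Real.sqrt (P x) * Real.sqrt (Q x)) := by
            intro x
            have hgm := Real.geom_mean_le_arith_mean2_weighted
              (by linarith : (0:ℝ) ≤ 2*α - 1) (by linarith : (0:ℝ) ≤ 2*(1-α))
              (hP0 x) (mul_nonneg (Real.sqrt_nonneg (P x)) (Real.sqrt_nonneg (Q x)))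
              (by ring)
            refine le_trans (le_of_eq ?_) hgm
            have hz : 0 ≤ P x * Q x := mul_nonneg (hP0 x) (hQ0 x)
            have h1' : (Real.sqrt (P x) * Real.sqrt (Q x)) ^ (2*(1-α)) = P x ^ (1-α) * Q x ^ (1-α) := by
              rw [← Real.sqrt_mul (hP0 x), Real.sqrt_eq_rpow, ← Real.rpow_mul hz,
                show (1/2) * (2*(1-α)) = 1-α by ring, Real.mul_rpow (hP0 x) (hQ0 x)]
            rw [h1', ← mul_assoc,
              ← Real.rpow_add' (hP0 x) (by intro h; exact (ne_of_gt hα0) (by linarith) : (2*α-1) + (1-α) ≠ 0),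
              show (2*α-1) + (1-α) = α by ring]
          calc W ≤ ∑ x, ((2*α - 1) * P x + 2 * (1-α) * (Real.sqrt (P x) * Real.sqrt (Q x))) :=
                Finset.sum_le_sum fun x _ => hpt x
            _ = (2*α - 1) + 2*(1-α) * Z := by
                rw [Finset.sum_add_distrib, ← Finset.mul_sum, ← Finset.mul_sum, ← hZ, hP1]
                ring
            _ = 1 - 2 * min α (1 - α) * (1 - Z) := by rw [hmin]; ring
      -- now D = (1/(α-1)) log W ≥ (1/(1-α)) (1 - W) ≥ (1/(1-α)) 2 min(α,1-α)(1-Z) ≥ 2α(1-Z)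
      have hlogW : Real.log W ≤ W - 1 := Real.log_le_sub_one_of_pos hWpos
      rw [hD, if_neg h1]
      have hIa : (0:ℝ) < 1 - α := by linarith
      have h1Z : 0 ≤ 1 - Z := by linarith
      have hne : α - 1 ≠ 0 := fun h => h1 (by linarith)
      have hne' : (1:ℝ) - α ≠ 0 := fun h => h1 (by linarith)
      have hDe : (1 / (α - 1)) * Real.log W = (1 / (1 - α)) * (- Real.log W) := by
        field_simp
        ring
      rw [hDe]
      have step1 : 2 * min α (1-α) * (1 - Z) ≤ - Real.log W := by nlinarith
      have step2 : 2 * α * (1 - α) * (1 - Z) ≤ 2 * min α (1-α) * (1 - Z) := by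
        rcases le_total α (1-α) with h | h
        · rw [min_eq_left h]
          nlinarith [mul_nonneg (mul_nonneg hα0.le hα0.le) h1Z]
        · rw [min_eq_right h]
          nlinarith [mul_nonneg (mul_nonneg hIa.le hIa.le) h1Z]
      calc 2 * α * (1 - Z) = (1/(1-α)) * (2 * α * (1-α) * (1 - Z)) := by
            field_simp
        _ ≤ (1/(1-α)) * (- Real.log W) := by
            apply mul_le_mul_of_nonneg_left _ (by positivity)
            linarith
  -- conclude
  have hDnn : 0 ≤ D := le_trans (by nlinarith) hkey
  have harg : ((1/2) * V) ^ 2 ≤ (2 / α) * D := by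
    have : (2 / α) * D ≥ (2/α) * (2 * α * (1 - Z)) :=
      mul_le_mul_of_nonneg_left hkey (by positivity)
    have e : (2/α) * (2 * α * (1 - Z)) = 4 * (1 - Z) := by
      field_simp; ring
    nlinarith [sq_nonneg V]
  have hVnn : 0 ≤ (1/2) * V := by
    have : 0 ≤ V := Finset.sum_nonneg fun x _ => abs_nonneg _
    linarith
  calc (1/2) * V ≤ Real.sqrt (((1/2) * V)^2) := by rw [Real.sqrt_sq hVnn]
    _ ≤ Real.sqrt ((2/α) * D) := Real.sqrt_le_sqrt harg
end

section
/- Let M be a finite index set, and for each m ∈ M let X(m) be an i.i.d. random variable with distribution P_X on a finite set X; let P(m) = 1/|M| and let P_{Y|X} be a channel to a finite set Y, with Q_Y ∈ P(Y) satisfying P_{Y|X}(·|x) ≪ Q_Y for all x. Define the random output distribution P_{Y|U}(y) := ∑_m P(m) P_{Y|X}(y|X(m)). Then for every s ∈ [0,1], E[∑_y P_{Y|U}(y)^{1+s} Q_Y(y)^{-s}] ≤ |M|^{-s} ∑_{x,y} P_X(x) P_{Y|X}(y|x)^{1+s} Q_Y(y)^{-s} + ∑_y P_Y(y)^{1+s}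 Q_Y(y)^{-s}, where P_Y(y) = ∑_x P_X(x) P_{Y|X}(y|x). Equivalently, e^{s D_{1+s}(P_{YU} ‖ Q_Y × P_U)} ≤ e^{s D_{1+s}(P_{XY} ‖ P_X × Q_Y) - s log|M|} + e^{s D_{1+s}(P_Y ‖ Q_Y)}. -/
open Finset

lemma norm_one {I X : Type} [Fintype I] [DecidableEq I] [Fintype X] (P : X → ℝ)
    (hP1 : ∑ x, P x = 1) : ∑ d : I → X, ∏ j, P (d j) = 1 := by
  rw [← Fintype.prod_sum]; simp [hP1]

lemma rpow_add_le_aux {a b s : ℝ} (ha : 0 ≤ a) (hb : 0 ≤ b) (hs0 : 0 ≤ s) (hs1 : s ≤ 1) :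
    (a + b) ^ s ≤ a ^ s + b ^ s := by
  lift a to NNReal using ha
  lift b to NNReal using hb
  exact_mod_cast NNReal.rpow_add_le_add_rpow a b hs0 hs1

lemma split_sum {I X : Type} [Fintype I] [DecidableEq I] [Fintype X] (P : X → ℝ)
    (i : I) (F : X → ℝ) (G : ({j // j ≠ i} → X) → ℝ) :
    ∑ d : I → X, (∏ j, P (d j)) * (F (d i) * G (fun j => d j.1))
      = (∑ x, P x * F x) * ∑ e : {j // j ≠ i} → X, (∏ j, P (e j)) * G e := by
  classical
  have key : ∀ d : I → X, (∏ j, P (d j)) * (F (d i) * G (fun j => d j.1))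
      = P (d i) * F (d i) * ((∏ j : {j // j ≠ i}, P (d j.1)) * G (fun j => d j.1)) := by
    intro d
    have hprod : ∏ j, P (d j) = P (d i) * ∏ j : {j // j ≠ i}, P (d j.1) := by
      rw [← Finset.mul_prod_erase univ _ (mem_univ i)]
      congr 1
      rw [Finset.prod_subtype (p := fun j => j ≠ i) (univ.erase i) (fun x => by simp)
        (fun j => P (d j))]
    rw [hprod]; ring
  simp_rw [key]
  rw [← Equiv.sum_comp (Equiv.funSplitAt i X).symm
    (fun d : I → X => P (d i) * F (d i) * ((∏ j : {j // j ≠ i}, P (d j.1)) * G (fun j => d j.1)))]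
  rw [Fintype.sum_prod_type]
  have h1 : ∀ (x : X) (t : {j // j ≠ i} → X), (Equiv.funSplitAt i X).symm (x, t) i = x := by
    intro x t; simp
  have h2 : ∀ (x : X) (t : {j // j ≠ i} → X) (j : {j // j ≠ i}),
      (Equiv.funSplitAt i X).symm (x, t) j.1 = t j := by
    intro x t j; simp [j.2]
  simp only [h1, h2]
  rw [Finset.sum_mul]
  refine Finset.sum_congr rfl fun x _ => ?_
  rw [Finset.mul_sum]

lemma marg {I X : Type} [Fintype I] [DecidableEq I] [Fintype X] (P : X → ℝ)
    (hP1 : ∑ x, P x = 1) (i : I) (F : X → ℝ) :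
    ∑ d : I → X, (∏ j, P (d j)) * F (d i) = ∑ x, P x * F x := by
  have := split_sum P i F (fun _ => 1)
  simpa [norm_one P hP1] using this

lemma key_lemma {M X : Type} [Fintype M] [DecidableEq M] [Nonempty M] [Fintype X]
    (P : X → ℝ) (hP0 : ∀ x, 0 ≤ P x) (hP1 : ∑ x, P x = 1)
    (w : X → ℝ) (hw0 : ∀ x, 0 ≤ w x) (s : ℝ) (hs : 0 < s) (hs1 : s ≤ 1) :
    ∑ c : M → X, (∏ m, P (c m)) * (∑ m, ((Fintype.card M : ℝ))⁻¹ * w (c m)) ^ (1 + s)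
      ≤ (Fintype.card M : ℝ) ^ (-s) * ∑ x, P x * (w x) ^ (1 + s) + (∑ x, P x * w x) ^ (1 + s) := by
  classical
  set n : ℝ := (Fintype.card M : ℝ) with hn
  have hnpos : 0 < n := by rw [hn]; exact_mod_cast Fintype.card_pos
  set K : ℝ := ∑ x, P x * w x with hK
  have hK0 : 0 ≤ K := Finset.sum_nonneg fun x _ => mul_nonneg (hP0 x) (hw0 x)
  have hprod0 : ∀ c : M → X, 0 ≤ ∏ m, P (c m) := fun c =>
    Finset.prod_nonneg fun m _ => hP0 _
  set A : (M → X) → ℝ := fun c => ∑ m, n⁻¹ * w (c m) with hA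
  have hA0 : ∀ c, 0 ≤ A c := fun c =>
    Finset.sum_nonneg fun m _ => mul_nonneg (by positivity) (hw0 _)
  set B : M → (M → X) → ℝ := fun m c => ∑ j : {j // j ≠ m}, n⁻¹ * w (c j.1) with hB
  have hB0 : ∀ m c, 0 ≤ B m c := fun m c =>
    Finset.sum_nonneg fun j _ => mul_nonneg (by positivity) (hw0 _)
  have hsplit : ∀ m c, A c = n⁻¹ * w (c m) + B m c := by
    intro m c
    show ∑ m', n⁻¹ * w (c m') = n⁻¹ * w (c m) + ∑ j : {j // j ≠ m}, n⁻¹ * w (c j.1)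
    rw [← Finset.add_sum_erase univ (fun j => n⁻¹ * w (c j)) (mem_univ m)]
    congr 1
    rw [Finset.sum_subtype (p := fun j => j ≠ m) (univ.erase m) (fun x => by simp)
      (fun j => n⁻¹ * w (c j))]
  have hpt : ∀ c : M → X, (∏ m, P (c m)) * A c ^ (1 + s)
      ≤ ∑ m, ((∏ m', P (c m')) * (n⁻¹ * w (c m) * (n⁻¹ * w (c m)) ^ s)
            + (∏ m', P (c m')) * (n⁻¹ * w (c m) * (B m c) ^ s)) := by
    intro c
    have hexp : A c ^ (1 + s) = ∑ m, n⁻¹ * w (c m) * A c ^ s := by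
      rw [Real.rpow_add' (hA0 c) (by linarith), Real.rpow_one, ← Finset.sum_mul]
    rw [hexp, Finset.mul_sum]
    refine Finset.sum_le_sum fun m _ => ?_
    rw [← mul_add]
    refine mul_le_mul_of_nonneg_left ?_ (hprod0 c)
    rw [← mul_add]
    refine mul_le_mul_of_nonneg_left ?_ (mul_nonneg (by positivity) (hw0 _))
    rw [hsplit m c]
    exact rpow_add_le_aux (mul_nonneg (by positivity) (hw0 _)) (hB0 m c) hs.le hs1
  have hT1 : ∀ m : M,
      (∑ c : M → X, (∏ m', P (c m')) * (n⁻¹ * w (c m) * (n⁻¹ * w (c m)) ^ s))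
        = n⁻¹ * (n ^ (-s) * ∑ x, P x * w x ^ (1 + s)) := by
    intro m
    rw [marg P hP1 m (fun x => n⁻¹ * w x * (n⁻¹ * w x) ^ s), Finset.mul_sum, Finset.mul_sum]
    refine Finset.sum_congr rfl fun x _ => ?_
    have e1 : (n⁻¹ * w x) ^ s = n ^ (-s) * w x ^ s := by
      rw [Real.mul_rpow (by positivity) (hw0 x), Real.inv_rpow hnpos.le,
        Real.rpow_neg hnpos.le]
    have e2 : w x ^ (1 + s) = w x * w x ^ s := by
      rw [Real.rpow_add' (hw0 x) (by linarith), Real.rpow_one]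
    rw [e1, e2]; ring
  have hT2 : ∀ m : M,
      (∑ c : M → X, (∏ m', P (c m')) * (n⁻¹ * w (c m) * (B m c) ^ s))
        ≤ n⁻¹ * K ^ (1 + s) := by
    intro m
    have hsp := split_sum P m (fun x => n⁻¹ * w x)
      (fun e : {j // j ≠ m} → X => (∑ j : {j // j ≠ m}, n⁻¹ * w (e j)) ^ s)
    rw [show (∑ c : M → X, (∏ m', P (c m')) * (n⁻¹ * w (c m) * (B m c) ^ s))
        = ∑ c : M → X, (∏ m', P (c m')) *
            ((fun x => n⁻¹ * w x) (c m) *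
              (fun e : {j // j ≠ m} → X => (∑ j : {j // j ≠ m}, n⁻¹ * w (e j)) ^ s)
                (fun j => c j.1)) from rfl, hsp]
    have hF : (∑ x, P x * (n⁻¹ * w x)) = n⁻¹ * K := by
      rw [hK, Finset.mul_sum]; exact Finset.sum_congr rfl fun x _ => by ring
    rw [hF]
    -- Jensen step
    set B' : ({j // j ≠ m} → X) → ℝ := fun e => ∑ j : {j // j ≠ m}, n⁻¹ * w (e j) with hB'
    have hB'0 : ∀ e, 0 ≤ B' e := fun e =>
      Finset.sum_nonneg fun j _ => mul_nonneg (by positivity) (hw0 _)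
    have hwt0 : ∀ e ∈ (univ : Finset ({j // j ≠ m} → X)), 0 ≤ ∏ j, P (e j) := fun e _ =>
      Finset.prod_nonneg fun j _ => hP0 _
    have hwt1 : ∑ e : {j // j ≠ m} → X, ∏ j, P (e j) = 1 := norm_one P hP1
    have hp : (1:ℝ) ≤ 1 / s := by rw [le_div_iff₀ hs]; linarith
    have jensen := Real.arith_mean_le_rpow_mean univ (fun e => ∏ j, P (e j))
      (fun e => (B' e) ^ s) hwt0 hwt1
      (fun e _ => Real.rpow_nonneg (hB'0 e) s) hp
    have hsimp : ∀ e, ((B' e) ^ s) ^ (1/s) = B' e := by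
      intro e
      rw [← Real.rpow_mul (hB'0 e), mul_one_div_cancel hs.ne', Real.rpow_one]
    simp only [hsimp, one_div_one_div] at jensen
    have hEB : ∑ e : {j // j ≠ m} → X, (∏ j, P (e j)) * B' e ≤ K := by
      have heq : ∑ e : {j // j ≠ m} → X, (∏ j, P (e j)) * B' e
          = ∑ j : {j // j ≠ m}, (n⁻¹ * K) := by
        calc ∑ e : {j // j ≠ m} → X, (∏ j, P (e j)) * B' e
            = ∑ e : {j // j ≠ m} → X, ∑ j : {j // j ≠ m},
                (∏ j', P (e j')) * (n⁻¹ * w (e j)) := by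
              refine Finset.sum_congr rfl fun e _ => ?_
              simp only [hB']
              rw [Finset.mul_sum]
          _ = ∑ j : {j // j ≠ m}, ∑ e : {j // j ≠ m} → X,
                (∏ j', P (e j')) * (n⁻¹ * w (e j)) := Finset.sum_comm
          _ = ∑ j : {j // j ≠ m}, (n⁻¹ * K) := by
              refine Finset.sum_congr rfl fun j _ => ?_
              rw [marg P hP1 j (fun x => n⁻¹ * w x), hK, Finset.mul_sum]
              exact Finset.sum_congr rfl fun x _ => by ring
      rw [heq, Finset.sum_const, card_univ, nsmul_eq_mul]
      have hcard : ((Fintype.card {j // j ≠ m} : ℕ) : ℝ) ≤ n := by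
        rw [hn]; exact_mod_cast Fintype.card_subtype_le _
      calc ((Fintype.card {j // j ≠ m} : ℕ) : ℝ) * (n⁻¹ * K)
          ≤ n * (n⁻¹ * K) := by
            refine mul_le_mul_of_nonneg_right hcard (by positivity)
        _ = K := by field_simp
    have hBE0 : 0 ≤ ∑ e : {j // j ≠ m} → X, (∏ j, P (e j)) * B' e :=
      Finset.sum_nonneg fun e _ => mul_nonneg (hwt0 e (mem_univ e)) (hB'0 e)
    have hJ : ∑ e : {j // j ≠ m} → X, (∏ j, P (e j)) * (B' e) ^ s ≤ K ^ s :=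
      le_trans jensen (Real.rpow_le_rpow hBE0 hEB hs.le)
    calc n⁻¹ * K * ∑ e : {j // j ≠ m} → X, (∏ j, P (e j)) * (B' e) ^ s
        ≤ n⁻¹ * K * K ^ s := by
          refine mul_le_mul_of_nonneg_left hJ (by positivity)
      _ = n⁻¹ * K ^ (1 + s) := by
          rw [Real.rpow_add' hK0 (by linarith), Real.rpow_one]; ring
  calc ∑ c : M → X, (∏ m, P (c m)) * A c ^ (1 + s)
      ≤ ∑ c : M → X, ∑ m, ((∏ m', P (c m')) * (n⁻¹ * w (c m) * (n⁻¹ * w (c m)) ^ s)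
            + (∏ m', P (c m')) * (n⁻¹ * w (c m) * (B m c) ^ s)) :=
        Finset.sum_le_sum fun c _ => hpt c
    _ = ∑ m : M, (∑ c : M → X, (∏ m', P (c m')) * (n⁻¹ * w (c m) * (n⁻¹ * w (c m)) ^ s))
          + ∑ m : M, (∑ c : M → X, (∏ m', P (c m')) * (n⁻¹ * w (c m) * (B m c) ^ s)) := by
        rw [Finset.sum_comm]
        simp_rw [Finset.sum_add_distrib]
    _ ≤ ∑ m : M, (n⁻¹ * (n ^ (-s) * ∑ x, P x * w x ^ (1 + s)))
          + ∑ m : M, (n⁻¹ * K ^ (1 + s)) := by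
        refine add_le_add (le_of_eq (Finset.sum_congr rfl fun m _ => hT1 m))
          (Finset.sum_le_sum fun m _ => hT2 m)
    _ = n ^ (-s) * (∑ x, P x * w x ^ (1 + s)) + K ^ (1 + s) := by
        rw [Finset.sum_const, Finset.sum_const, card_univ, nsmul_eq_mul, nsmul_eq_mul, ← hn]
        field_simp

/-- One-shot direct bound for an i.i.d. random codebook: the expectation (over the codebook
`c : M → X`, drawn i.i.d. from `P_X`) of `∑_y P_{Y|U}(y)^{1+s} Q_Y(y)^{-s}` is at most
`|M|^{-s} ∑_{x,y} P_X(x) P_{Y|X}(y|x)^{1+s} Q_Y(y)^{-s} + ∑_y P_Y(y)^{1+s} Q_Y(y)^{-s}`. -/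
theorem oneshot_direct_renyi {M X Y : Type} [Fintype M] [DecidableEq M] [Nonempty M]
    [Fintype X] [Fintype Y]
    (P : X → ℝ) (W : X → Y → ℝ) (Q : Y → ℝ) (s : ℝ)
    (hP0 : ∀ x, 0 ≤ P x) (hP1 : ∑ x, P x = 1)
    (hW0 : ∀ x y, 0 ≤ W x y) (hW1 : ∀ x, ∑ y, W x y = 1)
    (hQ0 : ∀ y, 0 ≤ Q y) (hQ1 : ∑ y, Q y = 1)
    (hac : ∀ x y, Q y = 0 → W x y = 0)
    (hs0 : 0 ≤ s) (hs1 : s ≤ 1) :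
    ∑ c : M → X, (∏ m, P (c m)) *
        ∑ y, (∑ m, ((Fintype.card M : ℝ))⁻¹ * W (c m) y) ^ (1 + s) * (Q y) ^ (-s)
      ≤ (Fintype.card M : ℝ) ^ (-s) * ∑ x, ∑ y, P x * (W x y) ^ (1 + s) * (Q y) ^ (-s)
        + ∑ y, (∑ x, P x * W x y) ^ (1 + s) * (Q y) ^ (-s) := by
  classical
  rcases eq_or_lt_of_le hs0 with hs | hs
  · -- s = 0
    obtain rfl : s = 0 := hs.symm
    have hsum1 : ∀ c : M → X,
        ∑ y, (∑ m, ((Fintype.card M : ℝ))⁻¹ * W (c m) y) ^ (1 + (0:ℝ)) * (Q y) ^ (-(0:ℝ)) = 1 := by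
      intro c
      have hn : (0:ℝ) < (Fintype.card M : ℝ) := by exact_mod_cast Fintype.card_pos
      simp only [neg_zero, Real.rpow_zero, mul_one, add_zero, Real.rpow_one]
      rw [Finset.sum_comm]
      have : ∀ m : M, ∑ y, ((Fintype.card M : ℝ))⁻¹ * W (c m) y = (Fintype.card M : ℝ)⁻¹ := by
        intro m; rw [← Finset.mul_sum, hW1, mul_one]
      rw [Finset.sum_congr rfl fun m _ => this m, Finset.sum_const, card_univ, nsmul_eq_mul]
      field_simp
    rw [Finset.sum_congr rfl fun (c : M → X) _ => by rw [hsum1 c]]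
    simp only [mul_one, neg_zero, Real.rpow_zero, add_zero, Real.rpow_one, one_mul]
    rw [norm_one P hP1]
    have h1 : ∑ x, ∑ y, P x * W x y = 1 := by
      rw [Finset.sum_congr rfl fun (x : X) _ => by rw [← Finset.mul_sum, hW1, mul_one]]
      exact hP1
    have h2 : ∑ y, ∑ x, P x * W x y = 1 := by rw [Finset.sum_comm]; exact h1
    rw [h1, h2]; norm_num
  · -- 0 < s
    have keyy : ∀ y : Y,
        ∑ c : M → X, (∏ m, P (c m)) * (∑ m, ((Fintype.card M : ℝ))⁻¹ * W (c m) y) ^ (1 + s)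
          ≤ (Fintype.card M : ℝ) ^ (-s) * ∑ x, P x * (W x y) ^ (1 + s)
            + (∑ x, P x * W x y) ^ (1 + s) :=
      fun y => key_lemma P hP0 hP1 (fun x => W x y) (fun x => hW0 x y) s hs hs1
    calc ∑ c : M → X, (∏ m, P (c m)) *
          ∑ y, (∑ m, ((Fintype.card M : ℝ))⁻¹ * W (c m) y) ^ (1 + s) * (Q y) ^ (-s)
        = ∑ y, (∑ c : M → X, (∏ m, P (c m)) *
            (∑ m, ((Fintype.card M : ℝ))⁻¹ * W (c m) y) ^ (1 + s)) * (Q y) ^ (-s) := by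
          simp_rw [Finset.mul_sum]
          rw [Finset.sum_comm]
          refine Finset.sum_congr rfl fun y _ => ?_
          rw [Finset.sum_mul]
          exact Finset.sum_congr rfl fun c _ => by ring
      _ ≤ ∑ y, ((Fintype.card M : ℝ) ^ (-s) * ∑ x, P x * (W x y) ^ (1 + s)
            + (∑ x, P x * W x y) ^ (1 + s)) * (Q y) ^ (-s) := by
          refine Finset.sum_le_sum fun y _ => ?_
          exact mul_le_mul_of_nonneg_right (keyy y) (Real.rpow_nonneg (hQ0 y) _)
      _ = (Fintype.card M : ℝ) ^ (-s) * ∑ x, ∑ y, P x * (W x y) ^ (1 + s) * (Q y) ^ (-s)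
            + ∑ y, (∑ x, P x * W x y) ^ (1 + s) * (Q y) ^ (-s) := by
          have hL : ∀ y, ((Fintype.card M : ℝ) ^ (-s) * ∑ x, P x * (W x y) ^ (1 + s)
                + (∑ x, P x * W x y) ^ (1 + s)) * (Q y) ^ (-s)
              = (∑ x, (Fintype.card M : ℝ) ^ (-s) * (P x * (W x y) ^ (1 + s) * (Q y) ^ (-s)))
                + (∑ x, P x * W x y) ^ (1 + s) * (Q y) ^ (-s) := by
            intro y
            rw [add_mul, Finset.mul_sum, Finset.sum_mul]
            congr 1
            exact Finset.sum_congr rfl fun x _ => by ring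
          rw [Finset.sum_congr rfl fun (y : Y) _ => hL y, Finset.sum_add_distrib]
          congr 1
          rw [Finset.sum_comm, Finset.mul_sum]
          refine Finset.sum_congr rfl fun x _ => ?_
          rw [Finset.mul_sum]
end

section
/- Let M be a finite set with |M| = e^R, let f : M → X be any (possibly random) encoder with induced input distribution P_X(x) = ∑_m (1/|M|) P(f(m)=x), and let P_{Y|X} be a channel to a finite set Y with target Q_Y ∈ P(Y). Then for every s ∈ [0,1], the expected exponentiated Rényi divergence of the output mixture P_{Y|U}(y) = ∑_m (1/|M|) P_{Y|X}(y|f_U(m)) satisfies E_U[∑_y P_{Y|U}(y)^{1+s} Q_Y(y)^{-s}] ≥ max{ e^{-sR} ∑_{x,y} P_X(x) P_{Y|X}(y|x)^{1+s} Q_Y(y)^{-s}, ∑_y P_Y(y)^{1+s} Q_Y(y)^{-s} }, where P_Y = P_{Y|X} ∘ P_X. -/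
open Finset

/-- One-shot converse bound: for any random encoder `f_U : M → X` (with randomness `U ~ μ`),
the expected exponentiated Rényi divergence of the output mixture is at least the maximum of
`e^{-sR} ∑_{x,y} P_X(x) W(y|x)^{1+s} Q(y)^{-s}` (where `e^R = |M|`) and
`∑_y P_Y(y)^{1+s} Q(y)^{-s}`, with `P_X` the induced input distribution. -/
theorem oneshot_converse_renyi {U M X Y : Type}
    [Fintype U] [Fintype M] [Nonempty M] [Fintype X] [DecidableEq X] [Fintype Y]
    (μ : U → ℝ) (f : U → M → X) (W : X → Y → ℝ) (Q : Y → ℝ) (s : ℝ)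
    (hμ0 : ∀ u, 0 ≤ μ u) (hμ1 : ∑ u, μ u = 1)
    (hW0 : ∀ x y, 0 ≤ W x y) (hW1 : ∀ x, ∑ y, W x y = 1)
    (hQ0 : ∀ y, 0 ≤ Q y) (hQ1 : ∑ y, Q y = 1)
    (hs0 : 0 ≤ s) (hs1 : s ≤ 1) :
    max
      ((Fintype.card M : ℝ) ^ (-s) *
        ∑ x, ∑ y,
          (∑ u, μ u * ∑ m, (Fintype.card M : ℝ)⁻¹ * (if f u m = x then (1 : ℝ) else 0)) *
            (W x y) ^ (1 + s) * (Q y) ^ (-s))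
      (∑ y,
        (∑ x, (∑ u, μ u * ∑ m, (Fintype.card M : ℝ)⁻¹ * (if f u m = x then (1 : ℝ) else 0)) *
            W x y) ^ (1 + s) * (Q y) ^ (-s))
      ≤ ∑ u, μ u *
          ∑ y, (∑ m, (Fintype.card M : ℝ)⁻¹ * W (f u m) y) ^ (1 + s) * (Q y) ^ (-s) := by
  classical
  set c : ℝ := (Fintype.card M : ℝ)⁻¹ with hc
  have hcard : (0 : ℝ) < (Fintype.card M : ℝ) := by
    exact_mod_cast Fintype.card_pos
  have hc0 : 0 < c := inv_pos.2 hcard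
  have h1s : (0:ℝ) < 1 + s := by linarith
  have h1sne : (1:ℝ) + s ≠ 0 := ne_of_gt h1s
  -- pushforward lemma
  have push : ∀ A : X → ℝ,
      ∑ x, (∑ u, μ u * ∑ m, c * (if f u m = x then (1 : ℝ) else 0)) * A x
        = ∑ u, μ u * ∑ m, c * A (f u m) := by
    intro A
    simp only [Finset.sum_mul, Finset.mul_sum]
    rw [Finset.sum_comm]
    refine Finset.sum_congr rfl fun u _ => ?_
    rw [Finset.sum_comm]
    refine Finset.sum_congr rfl fun m _ => ?_
    simp [mul_ite, ite_mul, Finset.sum_ite_eq, mul_assoc]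
  -- P u y
  set P : U → Y → ℝ := fun u y => ∑ m, c * W (f u m) y with hP
  have hP0 : ∀ u y, 0 ≤ P u y := fun u y =>
    Finset.sum_nonneg fun m _ => mul_nonneg hc0.le (hW0 _ _)
  have hQp : ∀ y, 0 ≤ (Q y) ^ (-s) := fun y => Real.rpow_nonneg (hQ0 y) _
  rw [max_le_iff]
  constructor
  · -- first bound
    have key : ∀ u, ∑ m, c ^ (1+s) * ∑ y, (W (f u m) y) ^ (1+s) * (Q y) ^ (-s)
        ≤ ∑ y, (P u y) ^ (1+s) * (Q y) ^ (-s) := by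
      intro u
      have swap : ∑ m, c ^ (1+s) * ∑ y, (W (f u m) y) ^ (1+s) * (Q y) ^ (-s)
          = ∑ y, (∑ m, c ^ (1+s) * (W (f u m) y) ^ (1+s)) * (Q y) ^ (-s) := by
        simp only [Finset.mul_sum, Finset.sum_mul]
        rw [Finset.sum_comm]
        refine Finset.sum_congr rfl fun y _ => Finset.sum_congr rfl fun m _ => by ring
      rw [swap]
      refine Finset.sum_le_sum fun y _ => mul_le_mul_of_nonneg_right ?_ (hQp y)
      -- ∑_m (c W_m)^{1+s} ≤ P^{1+s}
      have step : ∀ m : M, c ^ (1+s) * (W (f u m) y) ^ (1+s) ≤ (c * W (f u m) y) * (P u y) ^ s := by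
        intro m
        have h1 : c ^ (1+s) * (W (f u m) y) ^ (1+s) = (c * W (f u m) y) ^ (1+s) := by
          rw [Real.mul_rpow hc0.le (hW0 _ _)]
        have h2 : (c * W (f u m) y) ^ (1+s)
            = (c * W (f u m) y) * (c * W (f u m) y) ^ s := by
          rw [Real.rpow_add' (mul_nonneg hc0.le (hW0 _ _)) h1sne, Real.rpow_one]
        have hle : c * W (f u m) y ≤ P u y :=
          Finset.single_le_sum (f := fun m => c * W (f u m) y)
            (fun m _ => mul_nonneg hc0.le (hW0 _ _)) (Finset.mem_univ m)
        rw [h1, h2]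
        exact mul_le_mul_of_nonneg_left
          (Real.rpow_le_rpow (mul_nonneg hc0.le (hW0 _ _)) hle hs0)
          (mul_nonneg hc0.le (hW0 _ _))
      calc ∑ m, c ^ (1+s) * (W (f u m) y) ^ (1+s)
          ≤ ∑ m, (c * W (f u m) y) * (P u y) ^ s :=
            Finset.sum_le_sum fun m _ => step m
        _ = P u y * (P u y) ^ s := by rw [← Finset.sum_mul]
        _ = (P u y) ^ (1+s) := by
            rw [Real.rpow_add' (hP0 u y) h1sne, Real.rpow_one]
    -- rewrite LHS
    have lhs_eq : (Fintype.card M : ℝ) ^ (-s) *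
        ∑ x, ∑ y,
          (∑ u, μ u * ∑ m, c * (if f u m = x then (1 : ℝ) else 0)) *
            (W x y) ^ (1 + s) * (Q y) ^ (-s)
        = ∑ u, μ u * ∑ m, c ^ (1+s) * ∑ y, (W (f u m) y) ^ (1+s) * (Q y) ^ (-s) := by
      have hcs : (Fintype.card M : ℝ) ^ (-s) = c ^ s := by
        rw [hc, Real.inv_rpow hcard.le, ← Real.rpow_neg hcard.le]
      have inner : ∀ x, ∑ y,
          (∑ u, μ u * ∑ m, c * (if f u m = x then (1 : ℝ) else 0)) *
            (W x y) ^ (1 + s) * (Q y) ^ (-s)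
          = (∑ u, μ u * ∑ m, c * (if f u m = x then (1 : ℝ) else 0)) *
            ∑ y, (W x y) ^ (1 + s) * (Q y) ^ (-s) := by
        intro x
        rw [Finset.mul_sum]
        exact Finset.sum_congr rfl fun y _ => by ring
      simp only [inner]
      rw [push (fun x => ∑ y, (W x y) ^ (1 + s) * (Q y) ^ (-s)), hcs, Finset.mul_sum]
      refine Finset.sum_congr rfl fun u _ => ?_
      rw [Finset.mul_sum, Finset.mul_sum, Finset.mul_sum]
      refine Finset.sum_congr rfl fun m _ => ?_
      have : c ^ (1+s) = c ^ s * c := by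
        rw [Real.rpow_add' hc0.le h1sne, Real.rpow_one, mul_comm]
      rw [this]; ring
    rw [lhs_eq]
    exact Finset.sum_le_sum fun u _ => mul_le_mul_of_nonneg_left (key u) (hμ0 u)
  · -- second bound (Jensen)
    have mix : ∀ y, ∑ x, (∑ u, μ u * ∑ m, c * (if f u m = x then (1 : ℝ) else 0)) * W x y
        = ∑ u, μ u * P u y := fun y => push (fun x => W x y)
    calc ∑ y, (∑ x, (∑ u, μ u * ∑ m, c * (if f u m = x then (1 : ℝ) else 0)) * W x y) ^ (1 + s)
            * (Q y) ^ (-s)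
        = ∑ y, (∑ u, μ u * P u y) ^ (1 + s) * (Q y) ^ (-s) := by
          refine Finset.sum_congr rfl fun y _ => by rw [mix y]
      _ ≤ ∑ y, (∑ u, μ u * (P u y) ^ (1 + s)) * (Q y) ^ (-s) := by
          refine Finset.sum_le_sum fun y _ => mul_le_mul_of_nonneg_right ?_ (hQp y)
          exact Real.rpow_arith_mean_le_arith_mean_rpow Finset.univ μ (fun u => P u y)
            (fun u _ => hμ0 u) hμ1 (fun u _ => hP0 u y) (by linarith)
      _ = ∑ u, μ u * ∑ y, (P u y) ^ (1 + s) * (Q y) ^ (-s) := by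
          simp only [Finset.sum_mul, Finset.mul_sum]
          rw [Finset.sum_comm]
          exact Finset.sum_congr rfl fun u _ => Finset.sum_congr rfl fun y _ => by ring
end

section
/- Let X, Y be finite sets, P_X ∈ P(X) with full support, P_{Y|X} a channel, and Q_Y ∈ P(Y) with full support. Then for any probability distribution R_{XY} on X × Y (absolutely continuous with respect to P_X × P_{Y|X}) and reals s, t: (1−t) D(R_{XY} ‖ P_{XY}) + t D(R_{XY} ‖ P_X × P_Y) + s ∑_y R_Y(y) log(P_Y(y)/Q_Y(y)) ≥ −log ∑_{x,y} P_X(x) P_{Y|X}(y|x)^{1−t} P_Y(y)^{t−s} Q_Y(y)^s, with equality for the minimizing R_{XY} proportional to P_X(x) P_{Y|X}(y|x)^{1−t} P_Y(y)^{t−s} Q_Y(y)^s. In particular, −log ∑_{x,y} P_X(x) P_{Y|X}(y|x)^{1−t} P_Y(y)^{t−s} Q_Y(y)^s equals the infimum over R_{XY} of the left-hand side. -/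
open Finset
set_option maxHeartbeats 1000000


/-- The objective `(1−t) D(R‖P_{XY}) + t D(R‖P_X × P_Y) + s ∑_y R_Y(y) log(P_Y(y)/Q_Y(y))`,
where `P_{XY}(x,y) = P(x)W(y|x)` and `P_Y` is its `Y`-marginal. -/
noncomputable def varObjective {X Y : Type} [Fintype X] [Fintype Y]
    (P : X → ℝ) (W : X → Y → ℝ) (Q : Y → ℝ) (s t : ℝ) (R : X × Y → ℝ) : ℝ :=
  (1 - t) * ∑ p : X × Y, R p * Real.log (R p / (P p.1 * W p.1 p.2))
    + t * ∑ p : X × Y, R p * Real.log (R p / (P p.1 * (∑ x, P x * W x p.2)))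
    + s * ∑ y, (∑ x, R (x, y)) * Real.log ((∑ x, P x * W x y) / Q y)

/-- `S = ∑_{x,y} P(x) W(y|x)^{1−t} P_Y(y)^{t−s} Q(y)^s`. -/
noncomputable def varPartition {X Y : Type} [Fintype X] [Fintype Y]
    (P : X → ℝ) (W : X → Y → ℝ) (Q : Y → ℝ) (s t : ℝ) : ℝ :=
  ∑ x, ∑ y, P x * (W x y) ^ (1 - t) * (∑ x', P x' * W x' y) ^ (t - s) * (Q y) ^ s

lemma term_ineq (w u : ℝ) (hw : 0 ≤ w) (hu : 0 < u) : w - u ≤ w * Real.log (w / u) := by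
  rcases hw.eq_or_lt with h | h
  · simp [← h]; linarith
  · have h1 : Real.log (u / w) ≤ u / w - 1 := Real.log_le_sub_one_of_pos (by positivity)
    have h2 : Real.log (w / u) = - Real.log (u / w) := by
      rw [← Real.log_inv]; congr 1; field_simp
    have h3 := mul_le_mul_of_nonneg_left h1 h.le
    have h4 : w * (u / w - 1) = u - w := by field_simp
    rw [h2]; nlinarith

lemma gibbs {ι : Type} [Fintype ι] (w z : ι → ℝ) (hw : ∀ i, 0 ≤ w i)
    (hz : ∀ i, 0 < z i) (hw1 : ∑ i, w i = 1) :
    - Real.log (∑ i, z i) ≤ ∑ i, w i * Real.log (w i / z i) := by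
  have hne : (Finset.univ : Finset ι).Nonempty := by
    by_contra h
    simp only [Finset.not_nonempty_iff_eq_empty] at h
    rw [h] at hw1; simp at hw1
  set S := ∑ i, z i with hSdef
  have hS : 0 < S := Finset.sum_pos (fun i _ => hz i) hne
  have key : ∀ i ∈ Finset.univ, w i - z i / S ≤ w i * Real.log (w i / (z i / S)) :=
    fun i _ => term_ineq _ _ (hw i) (div_pos (hz i) hS)
  have hsum := Finset.sum_le_sum key
  have h1 : ∑ i, (w i - z i / S) = 0 := by
    rw [Finset.sum_sub_distrib, hw1, ← Finset.sum_div, ← hSdef, div_self hS.ne', sub_self]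
  have h2 : ∑ i, w i * Real.log (w i / (z i / S))
      = (∑ i, w i * Real.log (w i / z i)) + Real.log S := by
    have hlS : Real.log S = ∑ i, w i * Real.log S := by
      rw [← Finset.sum_mul, hw1, one_mul]
    rw [hlS, ← Finset.sum_add_distrib]
    refine Finset.sum_congr rfl fun i _ => ?_
    rcases (hw i).eq_or_lt with h | h
    · simp [← h]
    · have hzi := hz i
      rw [div_div_eq_mul_div, Real.log_div (mul_ne_zero h.ne' hS.ne') hzi.ne',
        Real.log_mul h.ne' hS.ne', Real.log_div h.ne' hzi.ne']
      ring
  rw [h1] at hsum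
  rw [h2] at hsum
  linarith

lemma objective_eq {X Y : Type} [Fintype X] [Fintype Y]
    (P : X → ℝ) (W : X → Y → ℝ) (Q : Y → ℝ)
    (hP0 : ∀ x, 0 < P x) (hW0 : ∀ x y, 0 < W x y) (hQ0 : ∀ y, 0 < Q y)
    (hPY : ∀ y, 0 < ∑ x, P x * W x y)
    (s t : ℝ) (R : X × Y → ℝ) (hR : ∀ p, 0 ≤ R p) :
    varObjective P W Q s t R
      = ∑ p : X × Y, R p * Real.log (R p /
          (P p.1 * (W p.1 p.2) ^ (1 - t) * (∑ x', P x' * W x' p.2) ^ (t - s) * (Q p.2) ^ s)) := by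
  unfold varObjective
  have h3 : ∑ y, (∑ x, R (x, y)) * Real.log ((∑ x, P x * W x y) / Q y)
      = ∑ p : X × Y, R p * Real.log ((∑ x, P x * W x p.2) / Q p.2) := by
    calc ∑ y, (∑ x, R (x, y)) * Real.log ((∑ x, P x * W x y) / Q y)
        = ∑ y, ∑ x, R (x, y) * Real.log ((∑ x, P x * W x y) / Q y) := by
          exact Finset.sum_congr rfl fun y _ => Finset.sum_mul _ _ _
      _ = ∑ x, ∑ y, R (x, y) * Real.log ((∑ x, P x * W x y) / Q y) :=
          Finset.sum_comm (f := fun y x => R (x, y) * Real.log ((∑ x, P x * W x y) / Q y))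
      _ = ∑ p : X × Y, R p * Real.log ((∑ x, P x * W x p.2) / Q p.2) :=
          (Fintype.sum_prod_type
            (f := fun p : X × Y => R p * Real.log ((∑ x, P x * W x p.2) / Q p.2))).symm
  rw [h3, Finset.mul_sum, Finset.mul_sum, Finset.mul_sum, ← Finset.sum_add_distrib,
    ← Finset.sum_add_distrib]
  refine Finset.sum_congr rfl fun p _ => ?_
  rcases (hR p).eq_or_lt with h | h
  · simp [← h]
  · have hP := hP0 p.1
    have hW := hW0 p.1 p.2
    have hQ := hQ0 p.2
    have hPYp := hPY p.2
    have e1 : Real.log (R p / (P p.1 * W p.1 p.2))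
        = Real.log (R p) - (Real.log (P p.1) + Real.log (W p.1 p.2)) := by
      rw [Real.log_div h.ne' (by positivity), Real.log_mul hP.ne' hW.ne']
    have e2 : Real.log (R p / (P p.1 * (∑ x, P x * W x p.2)))
        = Real.log (R p) - (Real.log (P p.1) + Real.log (∑ x, P x * W x p.2)) := by
      rw [Real.log_div h.ne' (by positivity), Real.log_mul hP.ne' hPYp.ne']
    have e3 : Real.log ((∑ x, P x * W x p.2) / Q p.2)
        = Real.log (∑ x, P x * W x p.2) - Real.log (Q p.2) := Real.log_div hPYp.ne' hQ.ne'
    have e4 : Real.log (R p /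
          (P p.1 * (W p.1 p.2) ^ (1 - t) * (∑ x', P x' * W x' p.2) ^ (t - s) * (Q p.2) ^ s))
        = Real.log (R p) - (Real.log (P p.1) + (1 - t) * Real.log (W p.1 p.2)
            + (t - s) * Real.log (∑ x', P x' * W x' p.2) + s * Real.log (Q p.2)) := by
      have hWp := Real.rpow_pos_of_pos hW (1 - t)
      have hPYq := Real.rpow_pos_of_pos hPYp (t - s)
      have hQs := Real.rpow_pos_of_pos hQ s
      rw [Real.log_div h.ne'
          (mul_ne_zero (mul_ne_zero (mul_ne_zero hP.ne' hWp.ne') hPYq.ne') hQs.ne'),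
        Real.log_mul (mul_ne_zero (mul_ne_zero hP.ne' hWp.ne') hPYq.ne') hQs.ne',
        Real.log_mul (mul_ne_zero hP.ne' hWp.ne') hPYq.ne',
        Real.log_mul hP.ne' hWp.ne',
        Real.log_rpow hW, Real.log_rpow hPYp, Real.log_rpow hQ]
    rw [e1, e2, e3, e4]
    ring

/-- Variational characterization: for all pmfs `R` on `X × Y`,
`(1−t) D(R‖P_{XY}) + t D(R‖P_X×P_Y) + s ∑_y R_Y log(P_Y/Q_Y) ≥ −log S`, with equality at the
tilted distribution `R* ∝ P(x) W(y|x)^{1−t} P_Y(y)^{t−s} Q(y)^s`; in particular `−log S` is the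
infimum (indeed the minimum) of the objective over all pmfs `R`. -/
theorem neg_log_partition_isLeast {X Y : Type} [Fintype X] [Fintype Y]
    (P : X → ℝ) (W : X → Y → ℝ) (Q : Y → ℝ)
    (hP0 : ∀ x, 0 < P x) (hP1 : ∑ x, P x = 1)
    (hW0 : ∀ x y, 0 < W x y) (hW1 : ∀ x, ∑ y, W x y = 1)
    (hQ0 : ∀ y, 0 < Q y) (hQ1 : ∑ y, Q y = 1)
    (s t : ℝ) :
    (∀ R : X × Y → ℝ, (∀ p, 0 ≤ R p) → (∑ p, R p = 1) →
        - Real.log (varPartition P W Q s t) ≤ varObjective P W Q s t R)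
    ∧ varObjective P W Q s t
        (fun p => P p.1 * (W p.1 p.2) ^ (1 - t) * (∑ x', P x' * W x' p.2) ^ (t - s)
            * (Q p.2) ^ s / varPartition P W Q s t)
        = - Real.log (varPartition P W Q s t)
    ∧ IsLeast {v : ℝ | ∃ R : X × Y → ℝ, (∀ p, 0 ≤ R p) ∧ (∑ p, R p = 1)
          ∧ v = varObjective P W Q s t R}
        (- Real.log (varPartition P W Q s t)) := by
  have hXne : (Finset.univ : Finset X).Nonempty := by
    by_contra h
    simp only [Finset.not_nonempty_iff_eq_empty] at h
    rw [h] at hP1; simp at hP1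
  have hPY : ∀ y, 0 < ∑ x, P x * W x y :=
    fun y => Finset.sum_pos (fun x _ => mul_pos (hP0 x) (hW0 x y)) hXne
  set G : X × Y → ℝ := fun p =>
    P p.1 * (W p.1 p.2) ^ (1 - t) * (∑ x', P x' * W x' p.2) ^ (t - s) * (Q p.2) ^ s with hG
  have hGpos : ∀ p, 0 < G p := fun p => by
    have hP := hP0 p.1; have hW := hW0 p.1 p.2; have hQ := hQ0 p.2; have hPYp := hPY p.2
    simp only [hG]; positivity
  have hSeq : varPartition P W Q s t = ∑ p : X × Y, G p := by
    rw [varPartition, hG, Fintype.sum_prod_type]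
  have hS : 0 < varPartition P W Q s t := by
    rw [hSeq]
    obtain ⟨x, -⟩ := hXne
    have hYne : (Finset.univ : Finset Y).Nonempty := by
      by_contra h
      simp only [Finset.not_nonempty_iff_eq_empty] at h
      have := hW1 x
      rw [h] at this; simp at this
    obtain ⟨y, -⟩ := hYne
    exact Finset.sum_pos (fun p _ => hGpos p) ⟨(x, y), Finset.mem_univ _⟩
  have lower : ∀ R : X × Y → ℝ, (∀ p, 0 ≤ R p) → (∑ p, R p = 1) →
      - Real.log (varPartition P W Q s t) ≤ varObjective P W Q s t R := by
    intro R hR hR1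
    rw [objective_eq P W Q hP0 hW0 hQ0 hPY s t R hR, hSeq]
    exact gibbs R G hR hGpos hR1
  have hRstar0 : ∀ p, 0 ≤ G p / varPartition P W Q s t :=
    fun p => le_of_lt (div_pos (hGpos p) hS)
  have hRstar1 : ∑ p : X × Y, G p / varPartition P W Q s t = 1 := by
    rw [← Finset.sum_div, ← hSeq, div_self hS.ne']
  have eqn : varObjective P W Q s t
      (fun p => P p.1 * (W p.1 p.2) ^ (1 - t) * (∑ x', P x' * W x' p.2) ^ (t - s)
          * (Q p.2) ^ s / varPartition P W Q s t)
      = - Real.log (varPartition P W Q s t) := by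
    have : (fun p : X × Y => P p.1 * (W p.1 p.2) ^ (1 - t) * (∑ x', P x' * W x' p.2) ^ (t - s)
        * (Q p.2) ^ s / varPartition P W Q s t) = fun p => G p / varPartition P W Q s t := rfl
    rw [this, objective_eq P W Q hP0 hW0 hQ0 hPY s t _ hRstar0]
    have step : ∀ p : X × Y, G p / varPartition P W Q s t *
        Real.log ((G p / varPartition P W Q s t) / G p)
        = G p / varPartition P W Q s t * (- Real.log (varPartition P W Q s t)) := by
      intro p
      congr 1
      rw [div_right_comm, div_self (hGpos p).ne', one_div, Real.log_inv]
    calc ∑ p : X × Y, G p / varPartition P W Q s t *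
          Real.log ((G p / varPartition P W Q s t) / G p)
        = ∑ p : X × Y, G p / varPartition P W Q s t *
            (- Real.log (varPartition P W Q s t)) := Finset.sum_congr rfl fun p _ => step p
      _ = - Real.log (varPartition P W Q s t) := by
          rw [← Finset.sum_mul, hRstar1, one_mul]
  refine ⟨lower, eqn, ⟨⟨_, hRstar0, hRstar1, eqn.symm⟩, ?_⟩⟩
  rintro v ⟨R, h0, h1, rfl⟩
  exact lower R h0 h1
end

section
/- Let X, Y be finite sets, P̃_X ∈ P(X), P_{Y|X} a channel and Q_Y a full-support distribution on Y. Then for each x and s > 0, (1/s) log ∑_y P_{Y|X}(y|x)^{1+s} Q_Y(y)^{-s} = max over channels P̃_{Y|X} of [ (−1/s − 1) D(P̃_{Y|X}(·|x) ‖ P_{Y|X}(·|x)) + ∑_y P̃_{Y|X}(y|x) log(P̃_{Y|X}(y|x)/Q_Y(y)) ]; consequently ∑_x P̃_X(x) D_{1+s}(P_{Y|X}(·|x) ‖ Q_Y) = max_{P̃_{Y|X}} { (−1/s − 1) D(P̃_{Y|X}‖P_{Y|X}|P̃_X) + D(P̃_{Y|X}‖Q_Y|P̃_X) }. -/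
open Finset

private lemma univ_nonempty_of_sum_one {Y : Type} [Fintype Y] {V : Y → ℝ}
    (hV1 : ∑ y, V y = 1) : (Finset.univ : Finset Y).Nonempty := by
  rcases Finset.univ.eq_empty_or_nonempty (α := Y) with h | h
  · rw [h] at hV1; simp at hV1
  · exact h

private lemma gibbs_s17 {Y : Type} [Fintype Y] (V f : Y → ℝ)
    (hV0 : ∀ y, 0 ≤ V y) (hV1 : ∑ y, V y = 1) (hf : ∀ y, 0 < f y) :
    ∑ y, V y * Real.log (f y / V y) ≤ Real.log (∑ y, f y) := by
  have hS : 0 < ∑ y, f y :=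
    Finset.sum_pos (fun y _ => hf y) (univ_nonempty_of_sum_one hV1)
  have hS' : (∑ y, f y) ≠ 0 := ne_of_gt hS
  have key : ∀ y, V y * Real.log (f y / V y)
      ≤ f y / (∑ y, f y) - V y + V y * Real.log (∑ y, f y) := by
    intro y
    rcases eq_or_lt_of_le (hV0 y) with h | h
    · rw [← h]
      simp only [zero_mul, sub_zero, add_zero]
      exact (div_pos (hf y) hS).le
    · have hV : V y ≠ 0 := ne_of_gt h
      have hpos : 0 < f y / ((∑ y, f y) * V y) := div_pos (hf y) (mul_pos hS h)
      have h1 : f y / V y = (f y / ((∑ y, f y) * V y)) * (∑ y, f y) := by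
        field_simp
      rw [h1, Real.log_mul (ne_of_gt hpos) hS', mul_add]
      have h2 : Real.log (f y / ((∑ y, f y) * V y)) ≤ f y / ((∑ y, f y) * V y) - 1 :=
        Real.log_le_sub_one_of_pos hpos
      have h3 := mul_le_mul_of_nonneg_left h2 h.le
      have h4 : V y * (f y / ((∑ y, f y) * V y) - 1) = f y / (∑ y, f y) - V y := by
        field_simp
      linarith
  calc ∑ y, V y * Real.log (f y / V y)
      ≤ ∑ y, (f y / (∑ y, f y) - V y + V y * Real.log (∑ y, f y)) :=
        Finset.sum_le_sum (fun y _ => key y)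
    _ = Real.log (∑ y, f y) := by
        rw [Finset.sum_add_distrib, Finset.sum_sub_distrib, ← Finset.sum_div,
          ← Finset.sum_mul, hV1]
        field_simp
        ring

private lemma identity {Y : Type} [Fintype Y] (V Wx Q : Y → ℝ) (s : ℝ) (hs : 0 < s)
    (hV0 : ∀ y, 0 ≤ V y) (hW0 : ∀ y, 0 < Wx y) (hQ0 : ∀ y, 0 < Q y) :
    (-1 / s - 1) * (∑ y, V y * Real.log (V y / Wx y)) + ∑ y, V y * Real.log (V y / Q y)
      = (1 / s) * ∑ y, V y * Real.log ((Wx y ^ (1 + s) * Q y ^ (-s)) / V y) := by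
  rw [Finset.mul_sum, Finset.mul_sum, ← Finset.sum_add_distrib]
  apply Finset.sum_congr rfl
  intro y _
  rcases eq_or_lt_of_le (hV0 y) with h | h
  · rw [← h]; simp
  · have hV : V y ≠ 0 := ne_of_gt h
    have hWp : (0:ℝ) < Wx y ^ (1 + s) := Real.rpow_pos_of_pos (hW0 y) _
    have hQp : (0:ℝ) < Q y ^ (-s) := Real.rpow_pos_of_pos (hQ0 y) _
    rw [Real.log_div hV (ne_of_gt (hW0 y)), Real.log_div hV (ne_of_gt (hQ0 y)),
      Real.log_div (by positivity) hV,
      Real.log_mul (ne_of_gt hWp) (ne_of_gt hQp),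
      Real.log_rpow (hW0 y), Real.log_rpow (hQ0 y)]
    field_simp
    ring

private lemma pointwise {Y : Type} [Fintype Y] (Wx Q : Y → ℝ) (s : ℝ) (hs : 0 < s)
    (hW0 : ∀ y, 0 < Wx y) (hW1 : ∑ y, Wx y = 1) (hQ0 : ∀ y, 0 < Q y) :
    IsGreatest {r : ℝ | ∃ V : Y → ℝ, (∀ y, 0 ≤ V y) ∧ (∑ y, V y = 1) ∧
      r = (-1 / s - 1) * (∑ y, V y * Real.log (V y / Wx y))
          + ∑ y, V y * Real.log (V y / Q y)}
      ((1 / s) * Real.log (∑ y, (Wx y) ^ (1 + s) * (Q y) ^ (-s))) := by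
  have hf0 : ∀ y, (0:ℝ) < Wx y ^ (1 + s) * Q y ^ (-s) := by
    intro y
    exact mul_pos (Real.rpow_pos_of_pos (hW0 y) _) (Real.rpow_pos_of_pos (hQ0 y) _)
  have hY : (Finset.univ : Finset Y).Nonempty := univ_nonempty_of_sum_one hW1
  have hS : 0 < ∑ y, Wx y ^ (1 + s) * Q y ^ (-s) :=
    Finset.sum_pos (fun y _ => hf0 y) hY
  have hS' := ne_of_gt hS
  constructor
  · refine ⟨fun y => (Wx y ^ (1 + s) * Q y ^ (-s)) / (∑ y, Wx y ^ (1 + s) * Q y ^ (-s)),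
      fun y => (div_pos (hf0 y) hS).le, ?_, ?_⟩
    · rw [← Finset.sum_div]; field_simp
    · rw [identity _ Wx Q s hs (fun y => (div_pos (hf0 y) hS).le) hW0 hQ0]
      congr 1
      have hterm : ∀ y ∈ Finset.univ,
          (Wx y ^ (1 + s) * Q y ^ (-s)) / (∑ y, Wx y ^ (1 + s) * Q y ^ (-s))
            * Real.log ((Wx y ^ (1 + s) * Q y ^ (-s)) /
              ((Wx y ^ (1 + s) * Q y ^ (-s)) / (∑ y, Wx y ^ (1 + s) * Q y ^ (-s))))
          = (Wx y ^ (1 + s) * Q y ^ (-s)) / (∑ y, Wx y ^ (1 + s) * Q y ^ (-s))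
            * Real.log (∑ y, Wx y ^ (1 + s) * Q y ^ (-s)) := by
        intro y _
        congr 2
        have := ne_of_gt (hf0 y)
        field_simp
        exact div_self this
      rw [Finset.sum_congr rfl hterm, ← Finset.sum_mul, ← Finset.sum_div]
      field_simp
  · rintro r ⟨V, hV0, hV1, rfl⟩
    rw [identity V Wx Q s hs hV0 hW0 hQ0]
    have := gibbs_s17 V (fun y => Wx y ^ (1 + s) * Q y ^ (-s)) hV0 hV1 hf0
    have h1s : (0:ℝ) ≤ 1 / s := by positivity
    exact mul_le_mul_of_nonneg_left this h1s

/-- Variational characterization of the Rényi divergence: for each `x` and `s > 0`,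
`(1/s) log ∑_y W(y|x)^{1+s} Q(y)^{-s}` is the maximum over distributions `V` on `Y` of
`(−1/s − 1) D(V ‖ W(·|x)) + ∑_y V(y) log(V(y)/Q(y))`; consequently, averaging over `P̃_X`,
`∑_x P̃_X(x) D_{1+s}(W(·|x)‖Q)` is the maximum over channels `Ṽ` of
`(−1/s − 1) D(Ṽ‖W|P̃_X) + D(Ṽ‖Q|P̃_X)`. -/
theorem renyi_variational {X Y : Type} [Fintype X] [Fintype Y]
    (PX : X → ℝ) (W : X → Y → ℝ) (Q : Y → ℝ) (s : ℝ) (hs : 0 < s)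
    (hPX0 : ∀ x, 0 ≤ PX x) (hPX1 : ∑ x, PX x = 1)
    (hW0 : ∀ x y, 0 < W x y) (hW1 : ∀ x, ∑ y, W x y = 1)
    (hQ0 : ∀ y, 0 < Q y) (hQ1 : ∑ y, Q y = 1) :
    (∀ x, IsGreatest
        {r : ℝ | ∃ V : Y → ℝ, (∀ y, 0 ≤ V y) ∧ (∑ y, V y = 1) ∧
          r = (-1 / s - 1) * (∑ y, V y * Real.log (V y / W x y))
              + ∑ y, V y * Real.log (V y / Q y)}
        ((1 / s) * Real.log (∑ y, (W x y) ^ (1 + s) * (Q y) ^ (-s))))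
    ∧ IsGreatest
        {r : ℝ | ∃ V : X → Y → ℝ, (∀ x y, 0 ≤ V x y) ∧ (∀ x, ∑ y, V x y = 1) ∧
          r = (-1 / s - 1) * (∑ x, PX x * ∑ y, V x y * Real.log (V x y / W x y))
              + ∑ x, PX x * ∑ y, V x y * Real.log (V x y / Q y)}
        (∑ x, PX x * ((1 / s) * Real.log (∑ y, (W x y) ^ (1 + s) * (Q y) ^ (-s)))) := by
  have hpt := fun x => pointwise (W x) Q s hs (hW0 x) (hW1 x) hQ0
  refine ⟨hpt, ?_, ?_⟩
  · choose V hV0 hV1 hVeq using fun x => (hpt x).1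
    refine ⟨V, hV0, hV1, ?_⟩
    rw [Finset.mul_sum, ← Finset.sum_add_distrib]
    refine Finset.sum_congr rfl fun x _ => ?_
    rw [hVeq x]
    ring
  · rintro r ⟨V, hV0, hV1, rfl⟩
    rw [Finset.mul_sum, ← Finset.sum_add_distrib]
    refine Finset.sum_le_sum fun x _ => ?_
    have hx := (hpt x).2 ⟨V x, hV0 x, hV1 x, rfl⟩
    calc (-1 / s - 1) * (PX x * ∑ y, V x y * Real.log (V x y / W x y))
          + PX x * ∑ y, V x y * Real.log (V x y / Q y)
        = PX x * ((-1 / s - 1) * (∑ y, V x y * Real.log (V x y / W x y))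
            + ∑ y, V x y * Real.log (V x y / Q y)) := by ring
      _ ≤ PX x * ((1 / s) * Real.log (∑ y, (W x y) ^ (1 + s) * (Q y) ^ (-s))) :=
          mul_le_mul_of_nonneg_left hx (hPX0 x)
end

section
/- Let U be a non-negative random variable with E[U] = 1 taking finitely many values, and let s ∈ (0,1). Then E[(U − U^{1−s})/s] ≤ Var(U). -/
open Finset

lemma pointwise_bound {u s : ℝ} (hu : 0 ≤ u) (hs0 : 0 < s) (hs1 : s < 1) :
    (u - u ^ (1 - s)) / s ≤ u ^ (2 : ℕ) - u := by
  rw [div_le_iff₀ hs0]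
  rcases eq_or_lt_of_le hu with h | h
  · simp [← h, Real.zero_rpow (by linarith : (1:ℝ) - s ≠ 0)]
  have hv : u ^ s ≤ 1 + s * (u - 1) := by
    have := rpow_one_add_le_one_add_mul_self (s := u - 1) (p := s)
      (by linarith) hs0.le hs1.le
    simpa using this
  have huv : u ^ (1 - s) * u ^ s = u := by
    rw [← Real.rpow_add h]; simp
  have hw : 0 ≤ u ^ (1 - s) := Real.rpow_nonneg hu _
  have hv0 : 0 ≤ u ^ s := Real.rpow_nonneg hu _
  set w := u ^ (1 - s)
  have hwv : w * (1 + s * (u - 1)) ≥ u := by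
    calc w * (1 + s * (u - 1)) ≥ w * (u ^ s) := by
          exact mul_le_mul_of_nonneg_left hv hw
      _ = u := huv
  have hpos : 0 < 1 + s * (u - 1) := by nlinarith
  nlinarith [mul_nonneg hu (sq_nonneg (s - s * u)), sq_nonneg (s - s*u),
    mul_le_mul_of_nonneg_right hwv hpos.le]

/-- For a finitely supported non-negative random variable `U` with `E[U] = 1` and `s ∈ (0,1)`,
`E[(U − U^{1−s})/s] ≤ Var(U) = E[U²] − 1`. -/
theorem expectation_sub_rpow_div_le_var {Ω : Type} [Fintype Ω]
    (μ : Ω → ℝ) (U : Ω → ℝ)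
    (hμ0 : ∀ ω, 0 ≤ μ ω) (hμ1 : ∑ ω, μ ω = 1)
    (hU : ∀ ω, 0 ≤ U ω) (hEU : ∑ ω, μ ω * U ω = 1)
    (s : ℝ) (hs0 : 0 < s) (hs1 : s < 1) :
    ∑ ω, μ ω * ((U ω - (U ω) ^ (1 - s)) / s) ≤ (∑ ω, μ ω * (U ω) ^ (2 : ℕ)) - 1 := by
  have h : ∑ ω, μ ω * ((U ω - (U ω) ^ (1 - s)) / s)
      ≤ ∑ ω, μ ω * ((U ω) ^ (2 : ℕ) - U ω) := by
    apply Finset.sum_le_sum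
    intro ω _
    exact mul_le_mul_of_nonneg_left (pointwise_bound (hU ω) hs0 hs1) (hμ0 ω)
  calc _ ≤ ∑ ω, μ ω * ((U ω) ^ (2 : ℕ) - U ω) := h
    _ = (∑ ω, μ ω * (U ω) ^ (2 : ℕ)) - 1 := by
        simp only [mul_sub]
        rw [Finset.sum_sub_distrib, hEU]
end
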